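/- arXiv:2308.10463 — 2 statements merged into one kernel-verified Lean document; each statement's English description precedes it below -/
import Mathlib

section
/- Let G be a graph, π = {W_1,…,W_m} a clique vertex-partition of G, and G^π the fully clique-whiskered graph. Then the set {y_1,…,y_m} of whisker vertices is an independent set of G^π, and every maximal independent set of G^π has cardinality m, i.e., G^π is well-covered with independence number α(G^π) = m. -/
/-- The fully clique-whiskered graph `G^π` (see stmt 4). -/
def cliqueWhisker {V : Type*} (G : SimpleGraph V) {m : ℕ} (W : V → Fin m) :
    SimpleGraph (V ⊕ Fin m) where
  Adj x y := match x, y with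
    | .inl u, .inl v => G.Adj u v
    | .inl u, .inr c => W u = c
    | .inr c, .inl u => W u = c
    | .inr _, .inr _ => False
  symm := ⟨by rintro (u|c) (v|d) h <;> simp_all <;> exact h.symm⟩
  loopless := ⟨by rintro (u|c) h <;> simp_all⟩

/-- A finite set of vertices is independent in `H`. -/
def IsIndepSet {W : Type*} (H : SimpleGraph W) (s : Finset W) : Prop :=
  ∀ u ∈ s, ∀ v ∈ s, ¬ H.Adj u v

/-- The independence number of `H` (over finite vertex types). -/
noncomputable def indepNum {W : Type*} (H : SimpleGraph W) : ℕ :=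
  sSup {r | ∃ s : Finset W, IsIndepSet H s ∧ s.card = r}

section Aux
variable {V : Type*} [Fintype V] [DecidableEq V]
    (G : SimpleGraph V) (m : ℕ) (W : V → Fin m)

/-- class of a vertex of the whiskered graph -/
def cwCls {m : ℕ} (W : V → Fin m) : V ⊕ Fin m → Fin m := Sum.elim W id

lemma cwCls_injOn (hclique : ∀ u v, u ≠ v → W u = W v → G.Adj u v)
    (s : Finset (V ⊕ Fin m)) (hs : IsIndepSet (cliqueWhisker G W) s) :
    ∀ x ∈ s, ∀ y ∈ s, cwCls W x = cwCls W y → x = y := by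
  rintro (u|c) hx (v|d) hy h
  · by_contra hne
    exact hs _ hx _ hy (hclique u v (by simpa using hne) h)
  · exact absurd h (hs _ hx _ hy)
  · exact absurd h.symm (hs _ hx _ hy)
  · simpa [cwCls] using h

lemma cwCard_le (hclique : ∀ u v, u ≠ v → W u = W v → G.Adj u v)
    (s : Finset (V ⊕ Fin m)) (hs : IsIndepSet (cliqueWhisker G W) s) :
    s.card ≤ m := by
  have := Finset.card_le_card_of_injOn (cwCls W) (fun x _ => Finset.mem_univ _)
    (fun x hx y hy h => cwCls_injOn G m W hclique s hs x hx y hy h)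
  simpa using this

end Aux

/-- the set `{y_1,…,y_m}` of whisker vertices is independent in `G^π`,
every maximal independent set of `G^π` has cardinality `m` (`G^π` is well-covered),
and `α(G^π) = m`. -/
theorem cliqueWhisker_wellCovered {V : Type*} [Fintype V] [DecidableEq V]
    (G : SimpleGraph V) (m : ℕ) (W : V → Fin m)
    (hclique : ∀ u v, u ≠ v → W u = W v → G.Adj u v)
    (hsurj : Function.Surjective W) :
    IsIndepSet (cliqueWhisker G W) (Finset.univ.image Sum.inr) ∧
    (∀ s : Finset (V ⊕ Fin m), IsIndepSet (cliqueWhisker G W) s →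
      (∀ t : Finset (V ⊕ Fin m), IsIndepSet (cliqueWhisker G W) t → s ⊆ t → t = s) →
      s.card = m) ∧
    indepNum (cliqueWhisker G W) = m := by
  have hindep1 : IsIndepSet (cliqueWhisker G W) (Finset.univ.image Sum.inr) := by
    intro u hu v hv
    simp only [Finset.mem_image] at hu hv
    obtain ⟨c, _, rfl⟩ := hu
    obtain ⟨d, _, rfl⟩ := hv
    exact fun h => h
  have hcard1 : (Finset.univ.image (Sum.inr : Fin m → V ⊕ Fin m)).card = m := by
    rw [Finset.card_image_of_injective _ Sum.inr_injective, Finset.card_univ, Fintype.card_fin]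
  refine ⟨hindep1, ?_, ?_⟩
  · intro s hs hmax
    -- surjectivity of cwCls on s
    have hsurjs : ∀ c : Fin m, ∃ x ∈ s, cwCls W x = c := by
      intro c
      by_contra hc
      push_neg at hc
      have hind : IsIndepSet (cliqueWhisker G W) (insert (Sum.inr c) s) := by
        intro x hx y hy
        rcases Finset.mem_insert.mp hx with rfl | hx
        · rcases Finset.mem_insert.mp hy with rfl | hy
          · exact fun h => h
          · rcases y with v | d
            · intro h
              exact hc _ hy h
            · exact fun h => h
        · rcases Finset.mem_insert.mp hy with rfl | hy
          · rcases x with u | d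
            · intro h
              exact hc _ hx h
            · exact fun h => h
          · exact hs _ hx _ hy
      have := hmax _ hind (Finset.subset_insert _ _)
      have hmem : Sum.inr c ∈ s := this ▸ Finset.mem_insert_self _ _
      exact hc _ hmem rfl
    have : s.card = (Finset.univ : Finset (Fin m)).card := by
      apply Finset.card_bij (fun x _ => cwCls W x) (fun x _ => Finset.mem_univ _)
        (fun x hx y hy h => cwCls_injOn G m W hclique s hs x hx y hy h)
      intro c _
      obtain ⟨x, hx, hxc⟩ := hsurjs c
      exact ⟨x, hx, hxc⟩
    simpa using this
  · apply le_antisymm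
    · refine csSup_le ⟨m, ⟨_, hindep1, hcard1⟩⟩ ?_
      rintro r ⟨s, hs, rfl⟩
      exact cwCard_le G m W hclique s hs
    · exact le_csSup ⟨m, by rintro r ⟨s, hs, rfl⟩; exact cwCard_le G m W hclique s hs⟩
        ⟨_, hindep1, hcard1⟩
end

section
/- For any graph G, reg(I(G)) ≤ ord-match(G) + 1, where reg is the Castelnuovo–Mumford regularity of the edge ideal and ord-match(G) is the ordered matching number. -/
open MvPolynomial

variable {V : Type*} [Fintype V] [LinearOrder V] {K : Type*} [Field K]

/-- The Koszul differential on the Koszul complex `K_•(x_1,…,x_n)` of the sequence of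
all variables (the minimal free resolution of the residue field `K = S/m`), written in
terms of the basis `e_T`, `T ⊆ {x_1,…,x_n}`: a chain is a function
`c : Finset V → S` (the coefficient of `e_T`), and
`(kd c) T = ∑_{t ∉ T} ± x_t · c (T ∪ {t})`. -/
noncomputable def koszulDiff (K : Type*) [Field K] (c : Finset V → MvPolynomial V K) :
    Finset V → MvPolynomial V K :=
  fun T => ∑ t ∈ Tᶜ,
    (-1 : MvPolynomial V K) ^ ((T.filter (fun s => s < t)).card) *
      (X t * c (insert t T))

/-- `Tor_i^S(K, I)_{i+d} ≠ 0`, computed via the Koszul resolution of the residue field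
`K = S/m`: there is a cycle of homological degree `i` and internal degree `i + d` in
`K_•(x) ⊗_S I` (a function `c : Finset V → I` supported on `i`-subsets, with
coefficients homogeneous of degree `d`, killed by the Koszul differential) which is
not a boundary. -/
def torNonzero (I : Ideal (MvPolynomial V K)) (i d : ℕ) : Prop :=
  ∃ c : Finset V → MvPolynomial V K,
    (∀ T, c T ∈ I) ∧ (∀ T, T.card ≠ i → c T = 0) ∧
    (∀ T, (c T).IsHomogeneous d) ∧
    koszulDiff K c = 0 ∧
    ¬ ∃ g : Finset V → MvPolynomial V K,
      (∀ T, g T ∈ I) ∧ (∀ T, T.card ≠ i + 1 → g T = 0) ∧ koszulDiff K g = c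

/-- The Castelnuovo–Mumford regularity of a homogeneous ideal `I` (as an `S`-module):
`reg(I) = max {d | Tor_i(K, I)_{i+d} ≠ 0 for some i}`. -/
noncomputable def regIdeal (I : Ideal (MvPolynomial V K)) : ℕ :=
  sSup {d | ∃ i, torNonzero I i d}

/-- The edge ideal `I(H)` of a graph. -/
noncomputable def edgeIdeal (K : Type*) [Field K] {W : Type*} (H : SimpleGraph W) :
    Ideal (MvPolynomial W K) :=
  Ideal.span {f | ∃ u v, H.Adj u v ∧ f = X u * X v}


/-- Ordered matching. -/
def IsOrderedMatching {W : Type*} (G : SimpleGraph W) (r : ℕ)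
    (a b : Fin r → W) : Prop :=
  1 ≤ r ∧
  (∀ i, G.Adj (a i) (b i)) ∧
  Function.Injective (Sum.elim a b) ∧
  (∀ i j, ¬ G.Adj (a i) (a j)) ∧
  (∀ i j : Fin r, G.Adj (a i) (b j) → i ≤ j)

/-- The ordered matching number (as a natural number; `0` if there is none). -/
noncomputable def ordMatchNum {W : Type*} (G : SimpleGraph W) : ℕ :=
  sSup {r | ∃ a b : Fin r → W, IsOrderedMatching G r a b}


set_option linter.unusedSectionVars false
set_option maxHeartbeats 1600000

namespace RegAux
variable {V : Type*} [Fintype V] [LinearOrder V]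

def sgn (K : Type*) [Field K] (T : Finset V) (t : V) : K :=
  (-1) ^ ((T.filter (fun s => s < t)).card)

variable {K : Type*} [Field K]

lemma sgn_mul_self (T : Finset V) (t : V) : sgn K T t * sgn K T t = 1 := by
  rw [sgn, ← mul_pow]; norm_num

lemma sgn_ne_zero (T : Finset V) (t : V) : sgn K T t ≠ 0 := by
  intro h
  have := sgn_mul_self (K := K) T t
  rw [h, mul_zero] at this
  exact zero_ne_one this

lemma sgn_insert {v : V} {T : Finset V} (h : v ∉ T) (t : V) :
    sgn K (insert v T) t = (if v < t then (-1 : K) else 1) * sgn K T t := by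
  unfold sgn
  rw [Finset.filter_insert]
  split_ifs with hvt
  · rw [Finset.card_insert_of_notMem (fun hc => h (Finset.mem_of_mem_filter _ hc)), pow_succ]
    ring
  · rw [one_mul]

lemma sgn_swap {v t : V} {S : Finset V} (hv : v ∉ S) (ht : t ∉ S) (hne : v ≠ t) :
    sgn K (insert v S) t * sgn K (insert t S) v = -(sgn K S t * sgn K S v) := by
  rw [sgn_insert hv t, sgn_insert ht v]
  rcases lt_or_gt_of_ne hne with h | h
  · rw [if_pos h, if_neg (asymm h)]; ring
  · rw [if_neg (asymm h), if_pos h]; ring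

lemma sgn_swap' {v t : V} {S : Finset V} (hv : v ∉ S) (ht : t ∉ S) (hne : v ≠ t) :
    sgn K S t * sgn K (insert t S) v = -(sgn K S v) * sgn K (insert v S) t := by
  have h1 := sgn_swap (K := K) hv ht hne
  have h2 := sgn_mul_self (K := K) (insert v S) t
  have h3 := sgn_mul_self (K := K) S t
  linear_combination (sgn K S t * sgn K (insert v S) t) * h1
    - (sgn K S t * sgn K (insert t S) v) * h2 - (sgn K S v * sgn K (insert v S) t) * h3

def bdry (lam : Finset V → K) : Finset V → K :=
  fun T => ∑ t ∈ Tᶜ, sgn K T t * lam (insert t T)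

lemma bdry_add (f g : Finset V → K) (T : Finset V) :
    bdry (fun U => f U + g U) T = bdry f T + bdry g T := by
  unfold bdry
  rw [← Finset.sum_add_distrib]
  exact Finset.sum_congr rfl fun t _ => by ring

lemma bdry_neg (f : Finset V → K) (T : Finset V) :
    bdry (fun U => -f U) T = -bdry f T := by
  unfold bdry
  rw [← Finset.sum_neg_distrib]
  exact Finset.sum_congr rfl fun t _ => by ring

lemma bdry_zero (T : Finset V) : bdry (fun _ => (0 : K)) T = 0 := by
  simp [bdry]

lemma compl_erase {a : V} {T : Finset V} (h : a ∈ T) :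
    (T.erase a)ᶜ = insert a Tᶜ := by
  ext x
  simp only [Finset.mem_compl, Finset.mem_erase, Finset.mem_insert]
  by_cases hx : x = a <;> simp [hx, h]

lemma compl_insert {v : V} {S : Finset V} :
    (insert v S)ᶜ = Sᶜ.erase v := by
  ext x
  simp only [Finset.mem_compl, Finset.mem_insert, Finset.mem_erase]
  tauto

def coneC (a : V) (lam : Finset V → K) : Finset V → K :=
  fun U => if a ∈ U then sgn K (U.erase a) a * lam (U.erase a) else 0

lemma bdry_coneC (a : V) (lam : Finset V → K) (T : Finset V) :
    bdry (coneC a lam) T =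
      lam T - (if a ∈ T then sgn K (T.erase a) a * bdry lam (T.erase a) else 0) := by
  by_cases ha : a ∈ T
  · rw [if_pos ha]
    set S := T.erase a with hS
    have haS : a ∉ S := Finset.notMem_erase a T
    have hins : insert a S = T := Finset.insert_erase ha
    have hstep : ∀ t ∈ Tᶜ, sgn K T t * coneC a lam (insert t T)
        = -(sgn K S a) * (sgn K S t * lam (insert t S)) := by
      intro t htc
      have htT : t ∉ T := Finset.mem_compl.mp htc
      have htne : t ≠ a := fun hc => htT (hc ▸ ha)
      have htS : t ∉ S := fun hc => htT (Finset.mem_of_mem_erase hc)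
      have hmem : a ∈ insert t T := Finset.mem_insert_of_mem ha
      have herase : (insert t T).erase a = insert t S := by
        rw [hS, Finset.erase_insert_of_ne htne]
      rw [coneC, if_pos hmem, herase, ← hins]
      have hsw := sgn_swap (K := K) haS htS (Ne.symm htne)
      calc sgn K (insert a S) t * (sgn K (insert t S) a * lam (insert t S))
          = (sgn K (insert a S) t * sgn K (insert t S) a) * lam (insert t S) := by ring
        _ = -(sgn K S t * sgn K S a) * lam (insert t S) := by
            rw [show sgn K (insert a S) t * sgn K (insert t S) a
              = -(sgn K S t * sgn K S a) from hsw]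
        _ = -(sgn K S a) * (sgn K S t * lam (insert t S)) := by ring
    have hsum : bdry (coneC a lam) T
        = -(sgn K S a) * ∑ t ∈ Tᶜ, sgn K S t * lam (insert t S) := by
      rw [bdry, Finset.sum_congr rfl hstep, ← Finset.mul_sum]
    have hcompl : Sᶜ = insert a Tᶜ := compl_erase ha
    have hanotc : a ∉ Tᶜ := by simp [ha]
    have hbS : bdry lam S = sgn K S a * lam (insert a S)
        + ∑ t ∈ Tᶜ, sgn K S t * lam (insert t S) := by
      rw [bdry, hcompl, Finset.sum_insert hanotc]
    rw [hsum]
    have h2 : ∑ t ∈ Tᶜ, sgn K S t * lam (insert t S)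
        = bdry lam S - sgn K S a * lam (insert a S) := by rw [hbS]; ring
    rw [h2, hins]
    have hsq := sgn_mul_self (K := K) S a
    calc -(sgn K S a) * (bdry lam S - sgn K S a * lam T)
        = (sgn K S a * sgn K S a) * lam T - sgn K S a * bdry lam S := by ring
      _ = lam T - sgn K S a * bdry lam S := by rw [hsq]; ring
  · rw [if_neg ha, sub_zero, bdry]
    have hmem : a ∈ Tᶜ := Finset.mem_compl.mpr ha
    rw [Finset.sum_eq_single_of_mem a hmem]
    · rw [coneC, if_pos (Finset.mem_insert_self a T), Finset.erase_insert ha, ← mul_assoc,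
        sgn_mul_self, one_mul]
    · intro t _ htne
      have : a ∉ insert t T := by
        simp only [Finset.mem_insert]
        push_neg
        exact ⟨Ne.symm htne, ha⟩
      rw [coneC, if_neg this, mul_zero]

/-- The `v`-part of a cycle is a cycle. -/
lemma beta_cycle (v : V) (lam : Finset V → K) (hcyc : ∀ T, bdry lam T = 0) (S : Finset V) :
    bdry (fun S' => if v ∈ S' then 0 else sgn K S' v * lam (insert v S')) S = 0 := by
  by_cases hv : v ∈ S
  · rw [bdry]
    apply Finset.sum_eq_zero
    intro t _
    rw [if_pos (Finset.mem_insert_of_mem hv), mul_zero]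
  · have hvc : v ∈ Sᶜ := Finset.mem_compl.mpr hv
    rw [bdry, ← Finset.sum_erase_add _ _ hvc, if_pos (Finset.mem_insert_self v S), mul_zero,
      add_zero]
    have hstep : ∀ t ∈ Sᶜ.erase v,
        sgn K S t * (if v ∈ insert t S then 0 else sgn K (insert t S) v * lam (insert v (insert t S)))
        = -(sgn K S v) * (sgn K (insert v S) t * lam (insert t (insert v S))) := by
      intro t ht
      have htne : t ≠ v := Finset.ne_of_mem_erase ht
      have htS : t ∉ S := Finset.mem_compl.mp (Finset.mem_of_mem_erase ht)
      have hvi : v ∉ insert t S := by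
        simp only [Finset.mem_insert]
        push_neg
        exact ⟨Ne.symm htne, hv⟩
      rw [if_neg hvi, Finset.insert_comm v t S]
      have hsw := sgn_swap' (K := K) hv htS (Ne.symm htne)
      calc sgn K S t * (sgn K (insert t S) v * lam (insert t (insert v S)))
          = (sgn K S t * sgn K (insert t S) v) * lam (insert t (insert v S)) := by ring
        _ = (-(sgn K S v) * sgn K (insert v S) t) * lam (insert t (insert v S)) := by rw [hsw]
        _ = -(sgn K S v) * (sgn K (insert v S) t * lam (insert t (insert v S))) := by ring
    rw [Finset.sum_congr rfl hstep, ← Finset.mul_sum, ← compl_insert, ← bdry, hcyc, mul_zero]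

/-- Splitting a cycle along a vertex `v`: the boundary of (minus) the cone of `gam`
recovers the `v`-part, and the `v`-free remainder is again a cycle. -/
lemma split_lemma (v : V) (lam gam : Finset V → K)
    (hcyc : ∀ T, bdry lam T = 0)
    (hgamv : ∀ S, v ∈ S → gam S = 0)
    (hgamb : ∀ S, bdry gam S = (if v ∈ S then 0 else sgn K S v * lam (insert v S))) :
    (∀ T, bdry (fun U => -coneC v gam U) T
        = lam T - (if v ∈ T then 0 else lam T + gam T)) ∧
    (∀ S, bdry (fun T => if v ∈ T then 0 else lam T + gam T) S = 0) := by
  constructor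
  · intro T
    rw [bdry_neg, bdry_coneC]
    by_cases hv : v ∈ T
    · rw [if_pos hv, if_pos hv]
      have hvS : v ∉ T.erase v := Finset.notMem_erase v T
      rw [hgamb, if_neg hvS, Finset.insert_erase hv, hgamv T hv]
      have := sgn_mul_self (K := K) (T.erase v) v
      calc -(0 - sgn K (T.erase v) v * (sgn K (T.erase v) v * lam T))
          = (sgn K (T.erase v) v * sgn K (T.erase v) v) * lam T := by ring
        _ = lam T - (lam T - lam T) := by rw [this]; ring
        _ = lam T - 0 := by ring
    · rw [if_neg hv, if_neg hv]; ring
  · intro S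
    by_cases hv : v ∈ S
    · rw [bdry]
      apply Finset.sum_eq_zero
      intro t _
      rw [if_pos (Finset.mem_insert_of_mem hv), mul_zero]
    · have hvc : v ∈ Sᶜ := Finset.mem_compl.mpr hv
      rw [bdry, ← Finset.sum_erase_add _ _ hvc, if_pos (Finset.mem_insert_self v S), mul_zero,
        add_zero]
      have hstep : ∀ t ∈ Sᶜ.erase v,
          sgn K S t * (if v ∈ insert t S then 0 else lam (insert t S) + gam (insert t S))
          = sgn K S t * lam (insert t S) + sgn K S t * gam (insert t S) := by
        intro t ht
        have htne : t ≠ v := Finset.ne_of_mem_erase ht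
        have hvi : v ∉ insert t S := by
          simp only [Finset.mem_insert]
          push_neg
          exact ⟨Ne.symm htne, hv⟩
        rw [if_neg hvi]; ring
      rw [Finset.sum_congr rfl hstep, Finset.sum_add_distrib]
      have h1 : ∑ t ∈ Sᶜ.erase v, sgn K S t * lam (insert t S)
          = bdry lam S - sgn K S v * lam (insert v S) := by
        rw [bdry, ← Finset.sum_erase_add _ _ hvc]; ring
      have h2 : ∑ t ∈ Sᶜ.erase v, sgn K S t * gam (insert t S)
          = bdry gam S - sgn K S v * gam (insert v S) := by
        rw [bdry, ← Finset.sum_erase_add _ _ hvc]; ring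
      rw [h1, h2, hcyc, hgamb, if_neg hv, hgamv _ (Finset.mem_insert_self v S)]
      ring

lemma sum_elim_inj {α β γ : Type*} {f : α → γ} {g : β → γ} :
    Function.Injective (Sum.elim f g) ↔
      Function.Injective f ∧ Function.Injective g ∧ ∀ a b, f a ≠ g b := by
  constructor
  · intro h
    refine ⟨fun x y hxy => ?_, fun x y hxy => ?_, fun x y hxy => ?_⟩
    · have := h (a₁ := Sum.inl x) (a₂ := Sum.inl y) (by simpa using hxy)
      simpa using this
    · have := h (a₁ := Sum.inr x) (a₂ := Sum.inr y) (by simpa using hxy)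
      simpa using this
    · have := h (a₁ := Sum.inl x) (a₂ := Sum.inr y) (by simpa using hxy)
      simp at this
  · rintro ⟨hf, hg, hfg⟩ x y hxy
    cases x with
    | inl x => cases y with
      | inl y => simp only [Sum.elim_inl] at hxy; rw [hf hxy]
      | inr y => exact absurd hxy (hfg x y)
    | inr x => cases y with
      | inl y => exact absurd hxy.symm (hfg y x)
      | inr y => simp only [Sum.elim_inr] at hxy; rw [hg hxy]

lemma snoc_inj {α : Type*} {r : ℕ} {f : Fin r → α} {x : α}
    (hf : Function.Injective f) (hx : ∀ j, f j ≠ x) :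
    Function.Injective (Fin.snoc f x) := by
  intro j k h
  induction j using Fin.lastCases with
  | last =>
    induction k using Fin.lastCases with
    | last => rfl
    | cast k =>
      rw [Fin.snoc_last, Fin.snoc_castSucc] at h
      exact absurd h.symm (hx k)
  | cast j =>
    induction k using Fin.lastCases with
    | last =>
      rw [Fin.snoc_last, Fin.snoc_castSucc] at h
      exact absurd h (hx j)
    | cast k =>
      rw [Fin.snoc_castSucc, Fin.snoc_castSucc] at h
      rw [hf h]



/-- Ordered matching of size `r` with all vertices inside `S`. -/
def OM (G : SimpleGraph V) (S : Finset V) (r : ℕ) : Prop :=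
  ∃ a b : Fin r → V, (∀ j, a j ∈ S) ∧ (∀ j, b j ∈ S) ∧ (∀ j, G.Adj (a j) (b j)) ∧
    Function.Injective (Sum.elim a b) ∧ (∀ j k, ¬ G.Adj (a j) (a k)) ∧
    (∀ j k, G.Adj (a j) (b k) → j ≤ k)

lemma OM_mono {G : SimpleGraph V} {S S' : Finset V} {r : ℕ} (hss : S ⊆ S')
    (h : OM G S r) : OM G S' r := by
  obtain ⟨a, b, h1, h2, h3⟩ := h
  exact ⟨a, b, fun j => hss (h1 j), fun j => hss (h2 j), h3⟩

lemma OM_single {G : SimpleGraph V} {S : Finset V} {p q : V}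
    (hpq : G.Adj p q) (hp : p ∈ S) (hq : q ∈ S) : OM G S 1 := by
  refine ⟨fun _ => p, fun _ => q, fun _ => hp, fun _ => hq, fun _ => hpq, ?_, ?_, ?_⟩
  · rw [sum_elim_inj]
    exact ⟨fun x y _ => Subsingleton.elim x y, fun x y _ => Subsingleton.elim x y,
      fun _ _ => hpq.ne⟩
  · intro _ _; exact fun h => G.irrefl h
  · intro j k _; exact le_of_eq (Subsingleton.elim j k)

lemma OM_extend {G : SimpleGraph V} {S T' : Finset V} {r : ℕ} {v u : V}
    (h : OM G S r) (huv : G.Adj v u) (hSv : ∀ s ∈ S, ¬ G.Adj v s)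
    (hvS : v ∉ S) (huS : u ∉ S)
    (hST : S ⊆ T') (hvT : v ∈ T') (huT : u ∈ T') : OM G T' (r + 1) := by
  obtain ⟨a, b, ha, hb, hadj, hinj, hind, hord⟩ := h
  obtain ⟨hia, hib, hiab⟩ := sum_elim_inj.mp hinj
  refine ⟨Fin.snoc a v, Fin.snoc b u, ?_, ?_, ?_, ?_, ?_, ?_⟩
  · intro j
    induction j using Fin.lastCases with
    | last => rw [Fin.snoc_last]; exact hvT
    | cast j => rw [Fin.snoc_castSucc]; exact hST (ha j)
  · intro j
    induction j using Fin.lastCases with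
    | last => rw [Fin.snoc_last]; exact huT
    | cast j => rw [Fin.snoc_castSucc]; exact hST (hb j)
  · intro j
    induction j using Fin.lastCases with
    | last => rw [Fin.snoc_last, Fin.snoc_last]; exact huv
    | cast j => rw [Fin.snoc_castSucc, Fin.snoc_castSucc]; exact hadj j
  · rw [sum_elim_inj]
    refine ⟨snoc_inj hia (fun j hj => hSv _ (hb j) (hj ▸ hadj j)), ?_, ?_⟩
    · refine snoc_inj hib (fun j hj => huS (hj ▸ hb j))
    · intro j k
      induction j using Fin.lastCases with
      | last =>
        induction k using Fin.lastCases with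
        | last => rw [Fin.snoc_last, Fin.snoc_last]; exact huv.ne
        | cast k => rw [Fin.snoc_last, Fin.snoc_castSucc]
                    exact fun hc => absurd (hc ▸ hb k) hvS
      | cast j =>
        induction k using Fin.lastCases with
        | last => rw [Fin.snoc_castSucc, Fin.snoc_last]
                  exact fun hc => huS (hc ▸ ha j)
        | cast k => rw [Fin.snoc_castSucc, Fin.snoc_castSucc]; exact hiab j k
  · intro j k
    induction j using Fin.lastCases with
    | last =>
      induction k using Fin.lastCases with
      | last => rw [Fin.snoc_last]; exact G.irrefl
      | cast k => rw [Fin.snoc_last, Fin.snoc_castSucc]; exact hSv _ (ha k)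
    | cast j =>
      induction k using Fin.lastCases with
      | last => rw [Fin.snoc_castSucc, Fin.snoc_last]
                exact fun hc => hSv _ (ha j) hc.symm
      | cast k => rw [Fin.snoc_castSucc, Fin.snoc_castSucc]; exact hind j k
  · intro j k
    induction k using Fin.lastCases with
    | last => exact fun _ => Fin.le_last j
    | cast k =>
      induction j using Fin.lastCases with
      | last =>
        rw [Fin.snoc_last, Fin.snoc_castSucc]
        exact fun hc => absurd hc (hSv _ (hb k))
      | cast j =>
        rw [Fin.snoc_castSucc, Fin.snoc_castSucc]
        intro hc
        exact Fin.castSucc_le_castSucc_iff.mpr (hord j k hc)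



lemma sdiff_insert' (W S : Finset V) (v : V) : W \ insert v S = (W.erase v) \ S := by
  ext x
  simp only [Finset.mem_sdiff, Finset.mem_erase, Finset.mem_insert]
  tauto

/-- Face predicate: `W \ T` contains an edge of `G`, or a vertex of `N`. -/
def OKf (G : SimpleGraph V) (W N T : Finset V) : Prop :=
  (∃ p q, G.Adj p q ∧ p ∈ W \ T ∧ q ∈ W \ T) ∨ ∃ p ∈ N, p ∉ T

theorem core (G : SimpleGraph V) (K : Type*) [Field K] :
    ∀ (m : ℕ) (W N : Finset V) (i d : ℕ) (lam : Finset V → K),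
      W.card ≤ m → N ⊆ W → 2 ≤ d → W.card = i + d →
      ¬ OM G (W \ N) (d - 1) →
      (∀ T, lam T ≠ 0 → T ⊆ W ∧ T.card = i ∧ OKf G W N T) →
      (∀ T, bdry lam T = 0) →
      ∃ mu : Finset V → K,
        (∀ U, mu U ≠ 0 → U ⊆ W ∧ U.card = i + 1 ∧ OKf G W N U) ∧
        (∀ T, bdry mu T = lam T) := by
  intro m
  induction m with
  | zero =>
    intro W N i d lam hm hNW hd hcard hno hsupp hcyc
    exact absurd hcard (by omega)
  | succ m IH =>
    intro W N i d lam hm hNW hd hcard hno hsupp hcyc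
    classical
    rcases N.eq_empty_or_nonempty with hN | ⟨v, hvN⟩
    · -- N = ∅
      subst hN
      rw [Finset.sdiff_empty] at hno
      by_cases hedge : ∃ p q, G.Adj p q ∧ p ∈ W ∧ q ∈ W
      · obtain ⟨v, u, hadj, hvW, huW⟩ := hedge
        have hd3 : 3 ≤ d := by
          by_contra hc
          have h1 : d - 1 = 1 := by omega
          exact hno (by rw [h1]; exact OM_single hadj hvW huW)
        set A := W.erase v with hA
        have hvA : v ∉ A := Finset.notMem_erase v W
        have hAW : A ⊆ W := Finset.erase_subset v W
        have hAcard : A.card = W.card - 1 := Finset.card_erase_of_mem hvW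
        set Nv := A.filter (fun x => G.Adj v x) with hNv
        have hgam : ∃ gam : Finset V → K,
            (∀ S, gam S ≠ 0 → S ⊆ A ∧ S.card = i ∧ OKf G A ∅ S) ∧
            (∀ S, bdry gam S
              = (if v ∈ S then 0 else sgn K S v * lam (insert v S))) ∧
            (∀ S, v ∈ S → gam S = 0) := by
          rcases i with _ | i'
          · refine ⟨fun _ => 0, fun U h => absurd rfl h, fun S => ?_, fun _ _ => rfl⟩
            rw [bdry_zero]
            by_cases hv : v ∈ S
            · rw [if_pos hv]
            · rw [if_neg hv]
              have : lam (insert v S) = 0 := by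
                by_contra hc
                have := (hsupp _ hc).2.1
                simp [Finset.card_insert_of_notMem hv] at this
              rw [this, mul_zero]
          · have hres := IH A ∅ i' d
              (fun S => if v ∈ S then 0 else sgn K S v * lam (insert v S))
              (by omega) (Finset.empty_subset A) hd (by omega)
              (by rw [Finset.sdiff_empty]
                  exact fun hom => hno (OM_mono hAW hom))
              ?_ (beta_cycle v lam hcyc)
            · obtain ⟨gam, hg1, hg2⟩ := hres
              refine ⟨gam, fun S hS => ?_, hg2, fun S hvS => ?_⟩
              · have := hg1 S hS
                exact ⟨this.1, this.2.1, this.2.2⟩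
              · by_contra hc
                exact hvA ((hg1 S hc).1 hvS)
            · intro S hS
              have hS' : (if v ∈ S then (0 : K)
                  else sgn K S v * lam (insert v S)) ≠ 0 := hS
              have hvS : v ∉ S := by
                intro hc; rw [if_pos hc] at hS'; exact hS' rfl
              rw [if_neg hvS] at hS'
              have hlam : lam (insert v S) ≠ 0 :=
                fun hc => hS' (by rw [hc, mul_zero])
              obtain ⟨h1, h2, h3⟩ := hsupp _ hlam
              have hSA : S ⊆ A := by
                intro s hs
                exact Finset.mem_erase.mpr
                  ⟨fun hc => hvS (hc ▸ hs), h1 (Finset.mem_insert_of_mem hs)⟩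
              have hScard : S.card = i' := by
                rw [Finset.card_insert_of_notMem hvS] at h2; omega
              refine ⟨hSA, hScard, ?_⟩
              rcases h3 with ⟨p, q, hpq, hp, hq⟩ | ⟨p, hpN, _⟩
              · left
                rw [sdiff_insert'] at hp hq
                exact ⟨p, q, hpq, hp, hq⟩
              · exact absurd hpN (Finset.notMem_empty p)
        obtain ⟨gam, hg1, hg2, hgv⟩ := hgam
        obtain ⟨hdel, hacyc⟩ := split_lemma v lam gam hcyc hgv hg2
        have halphasupp : ∀ T, (if v ∈ T then (0 : K) else lam T + gam T) ≠ 0 →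
            T ⊆ A ∧ T.card = i ∧ OKf G A Nv T := by
          intro T hT
          have hvT : v ∉ T := by intro hc; rw [if_pos hc] at hT; exact hT rfl
          rw [if_neg hvT] at hT
          have hor : lam T ≠ 0 ∨ gam T ≠ 0 := by
            by_contra hc
            push_neg at hc
            rw [hc.1, hc.2, add_zero] at hT
            exact hT rfl
          rcases hor with hlam | hgamne
          · obtain ⟨h1, h2, h3⟩ := hsupp T hlam
            have hTA : T ⊆ A := fun s hs =>
              Finset.mem_erase.mpr ⟨fun hc => hvT (hc ▸ hs), h1 hs⟩
            refine ⟨hTA, h2, ?_⟩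
            rcases h3 with ⟨p, q, hpq, hp, hq⟩ | ⟨p, hpN, _⟩
            · obtain ⟨hpW, hpT⟩ := Finset.mem_sdiff.mp hp
              obtain ⟨hqW, hqT⟩ := Finset.mem_sdiff.mp hq
              by_cases hpv : p = v
              · subst hpv
                right
                exact ⟨q, Finset.mem_filter.mpr
                  ⟨Finset.mem_erase.mpr ⟨hpq.ne', hqW⟩, hpq⟩, hqT⟩
              · by_cases hqv : q = v
                · subst hqv
                  right
                  exact ⟨p, Finset.mem_filter.mpr
                    ⟨Finset.mem_erase.mpr ⟨hpq.ne, hpW⟩, hpq.symm⟩, hpT⟩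
                · left
                  exact ⟨p, q, hpq,
                    Finset.mem_sdiff.mpr ⟨Finset.mem_erase.mpr ⟨hpv, hpW⟩, hpT⟩,
                    Finset.mem_sdiff.mpr ⟨Finset.mem_erase.mpr ⟨hqv, hqW⟩, hqT⟩⟩
            · exact absurd hpN (Finset.notMem_empty p)
          · obtain ⟨h1, h2, h3⟩ := hg1 T hgamne
            refine ⟨h1, h2, ?_⟩
            rcases h3 with ⟨p, q, hpq, hp, hq⟩ | ⟨p, hpN, _⟩
            · exact Or.inl ⟨p, q, hpq, hp, hq⟩
            · exact absurd hpN (Finset.notMem_empty p)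
        have hmu2 := IH A Nv i (d - 1)
          (fun T => if v ∈ T then 0 else lam T + gam T)
          (by omega) (Finset.filter_subset _ _) (by omega) (by omega)
          ?_ halphasupp hacyc
        · obtain ⟨mu2, hmu2s, hmu2b⟩ := hmu2
          have hmu2b' : ∀ T, bdry mu2 T
              = (if v ∈ T then (0 : K) else lam T + gam T) := hmu2b
          refine ⟨fun U => -coneC v gam U + mu2 U, ?_, ?_⟩
          · intro U hU
            have hU' : -coneC v gam U + mu2 U ≠ 0 := hU
            have hcases : -coneC v gam U ≠ 0 ∨ mu2 U ≠ 0 := by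
              by_contra hc
              push_neg at hc
              rw [hc.1, hc.2, add_zero] at hU'
              exact hU' rfl
            rcases hcases with hdelne | hmu2ne
            · have hconene : coneC v gam U ≠ 0 :=
                fun hc => hdelne (by rw [hc, neg_zero])
              have hvU : v ∈ U := by
                by_contra hc
                rw [coneC, if_neg hc] at hconene
                exact hconene rfl
              have hgamne : gam (U.erase v) ≠ 0 := by
                rw [coneC, if_pos hvU] at hconene
                exact fun hc => hconene (by rw [hc, mul_zero])
              obtain ⟨hSA, hSc, hSOK⟩ := hg1 _ hgamne
              have hUeq : insert v (U.erase v) = U := Finset.insert_erase hvU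
              have heq : A \ U.erase v = W \ U := by
                conv_rhs => rw [← hUeq]
                rw [sdiff_insert', ← hA]
              refine ⟨?_, ?_, ?_⟩
              · intro x hx
                by_cases hxv : x = v
                · exact hxv ▸ hvW
                · exact hAW (hSA (Finset.mem_erase.mpr ⟨hxv, hx⟩))
              · rw [← hUeq,
                  Finset.card_insert_of_notMem (Finset.notMem_erase v U), hSc]
              · rcases hSOK with ⟨p, q, hpq, hp, hq⟩ | ⟨p, hpN, _⟩
                · exact Or.inl ⟨p, q, hpq, heq ▸ hp, heq ▸ hq⟩
                · exact absurd hpN (Finset.notMem_empty p)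
            · obtain ⟨hUA, hUc, hUOK⟩ := hmu2s U hmu2ne
              refine ⟨hUA.trans hAW, hUc, ?_⟩
              rcases hUOK with ⟨p, q, hpq, hp, hq⟩ | ⟨p, hpNv, hpU⟩
              · left
                obtain ⟨hpA, hpU⟩ := Finset.mem_sdiff.mp hp
                obtain ⟨hqA, hqU⟩ := Finset.mem_sdiff.mp hq
                exact ⟨p, q, hpq, Finset.mem_sdiff.mpr ⟨hAW hpA, hpU⟩,
                  Finset.mem_sdiff.mpr ⟨hAW hqA, hqU⟩⟩
              · left
                obtain ⟨hpA, hpadj⟩ := Finset.mem_filter.mp hpNv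
                exact ⟨v, p, hpadj,
                  Finset.mem_sdiff.mpr ⟨hvW, fun hc => hvA (hUA hc)⟩,
                  Finset.mem_sdiff.mpr ⟨hAW hpA, hpU⟩⟩
          · intro T
            calc bdry (fun U => -coneC v gam U + mu2 U) T
                = bdry (fun U => -coneC v gam U) T + bdry mu2 T := bdry_add _ _ T
              _ = (lam T - (if v ∈ T then (0 : K) else lam T + gam T))
                  + (if v ∈ T then (0 : K) else lam T + gam T) := by
                    rw [hdel T, hmu2b' T]
              _ = lam T := by ring
        · intro hom
          have h1 : d - 1 - 1 + 1 = d - 1 := by omega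
          have hSv : ∀ s ∈ A \ Nv, ¬ G.Adj v s := by
            intro s hs hadjs
            obtain ⟨hsA, hsNv⟩ := Finset.mem_sdiff.mp hs
            exact hsNv (Finset.mem_filter.mpr ⟨hsA, hadjs⟩)
          have hvS : v ∉ A \ Nv := fun hc => hvA (Finset.mem_sdiff.mp hc).1
          have huS : u ∉ A \ Nv := by
            intro hc
            exact (Finset.mem_sdiff.mp hc).2
              (Finset.mem_filter.mpr ⟨Finset.mem_erase.mpr ⟨hadj.ne', huW⟩, hadj⟩)
          have hsub : A \ Nv ⊆ W := fun x hx => hAW (Finset.mem_sdiff.mp hx).1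
          have hext := OM_extend hom hadj hSv hvS huS hsub hvW huW
          rw [h1] at hext
          exact hno hext
      · have hlam0 : ∀ T, lam T = 0 := by
          intro T
          by_contra h
          obtain ⟨hTW, hTc, hOK⟩ := hsupp T h
          rcases hOK with ⟨p, q, hpq, hp, hq⟩ | ⟨p, hpN, _⟩
          · exact hedge ⟨p, q, hpq, (Finset.mem_sdiff.mp hp).1,
              (Finset.mem_sdiff.mp hq).1⟩
          · exact absurd hpN (Finset.notMem_empty p)
        exact ⟨fun _ => 0, fun U h => absurd rfl h,
          fun T => by rw [bdry_zero, hlam0]⟩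
    · -- N nonempty, with v ∈ N
      have hvW : v ∈ W := hNW hvN
      set A := W.erase v with hA
      have hvA : v ∉ A := Finset.notMem_erase v W
      have hAW : A ⊆ W := Finset.erase_subset v W
      have hAcard : A.card = W.card - 1 := Finset.card_erase_of_mem hvW
      have hNA : N.erase v ⊆ A := fun p hp =>
        Finset.mem_erase.mpr ⟨(Finset.mem_erase.mp hp).1,
          hNW (Finset.mem_of_mem_erase hp)⟩
      have hsd : A \ N.erase v = W \ N := by
        ext x
        simp only [Finset.mem_sdiff, Finset.mem_erase, hA]
        constructor
        · rintro ⟨⟨hxv, hxW⟩, hx2⟩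
          exact ⟨hxW, fun hxN => hx2 ⟨hxv, hxN⟩⟩
        · rintro ⟨hxW, hxN⟩
          exact ⟨⟨fun hc => hxN (hc ▸ hvN), hxW⟩, fun hc => hxN hc.2⟩
      have hgam : ∃ gam : Finset V → K,
          (∀ S, gam S ≠ 0 → S ⊆ A ∧ S.card = i ∧ OKf G A (N.erase v) S) ∧
          (∀ S, bdry gam S
            = (if v ∈ S then 0 else sgn K S v * lam (insert v S))) ∧
          (∀ S, v ∈ S → gam S = 0) := by
        rcases i with _ | i'
        · refine ⟨fun _ => 0, fun U h => absurd rfl h, fun S => ?_, fun _ _ => rfl⟩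
          rw [bdry_zero]
          by_cases hv : v ∈ S
          · rw [if_pos hv]
          · rw [if_neg hv]
            have : lam (insert v S) = 0 := by
              by_contra hc
              have := (hsupp _ hc).2.1
              simp [Finset.card_insert_of_notMem hv] at this
            rw [this, mul_zero]
        · have hres := IH A (N.erase v) i' d
            (fun S => if v ∈ S then 0 else sgn K S v * lam (insert v S))
            (by omega) hNA hd (by omega)
            (by rw [hsd]; exact hno)
            ?_ (beta_cycle v lam hcyc)
          · obtain ⟨gam, hg1, hg2⟩ := hres
            refine ⟨gam, fun S hS => ?_, hg2, fun S hvS => ?_⟩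
            · have := hg1 S hS
              exact ⟨this.1, this.2.1, this.2.2⟩
            · by_contra hc
              exact hvA ((hg1 S hc).1 hvS)
          · intro S hS
            have hS' : (if v ∈ S then (0 : K)
                else sgn K S v * lam (insert v S)) ≠ 0 := hS
            have hvS : v ∉ S := by
              intro hc; rw [if_pos hc] at hS'; exact hS' rfl
            rw [if_neg hvS] at hS'
            have hlam : lam (insert v S) ≠ 0 :=
              fun hc => hS' (by rw [hc, mul_zero])
            obtain ⟨h1, h2, h3⟩ := hsupp _ hlam
            have hSA : S ⊆ A := by
              intro s hs
              exact Finset.mem_erase.mpr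
                ⟨fun hc => hvS (hc ▸ hs), h1 (Finset.mem_insert_of_mem hs)⟩
            have hScard : S.card = i' := by
              rw [Finset.card_insert_of_notMem hvS] at h2; omega
            refine ⟨hSA, hScard, ?_⟩
            rcases h3 with ⟨p, q, hpq, hp, hq⟩ | ⟨p, hpN, hpT⟩
            · left
              rw [sdiff_insert'] at hp hq
              exact ⟨p, q, hpq, hp, hq⟩
            · right
              have hpv : p ≠ v := by
                intro hc
                exact hpT (hc ▸ Finset.mem_insert_self v S)
              exact ⟨p, Finset.mem_erase.mpr ⟨hpv, hpN⟩,
                fun hc => hpT (Finset.mem_insert_of_mem hc)⟩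
      obtain ⟨gam, hg1, hg2, hgv⟩ := hgam
      obtain ⟨hdel, hacyc⟩ := split_lemma v lam gam hcyc hgv hg2
      have halphasupp : ∀ T, (if v ∈ T then (0 : K) else lam T + gam T) ≠ 0 →
          T ⊆ A ∧ T.card = i := by
        intro T hT
        have hvT : v ∉ T := by intro hc; rw [if_pos hc] at hT; exact hT rfl
        rw [if_neg hvT] at hT
        have hor : lam T ≠ 0 ∨ gam T ≠ 0 := by
          by_contra hc
          push_neg at hc
          rw [hc.1, hc.2, add_zero] at hT
          exact hT rfl
        rcases hor with hlam | hgamne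
        · obtain ⟨h1, h2, _⟩ := hsupp T hlam
          exact ⟨fun s hs => Finset.mem_erase.mpr
            ⟨fun hc => hvT (hc ▸ hs), h1 hs⟩, h2⟩
        · obtain ⟨h1, h2, _⟩ := hg1 T hgamne
          exact ⟨h1, h2⟩
      have hAne : A.Nonempty := Finset.card_pos.mp (by omega)
      obtain ⟨a, haA⟩ := hAne
      have hmu2b : ∀ T,
          bdry (coneC a (fun T => if v ∈ T then (0 : K) else lam T + gam T)) T
          = (if v ∈ T then (0 : K) else lam T + gam T) := by
        intro T
        rw [bdry_coneC, hacyc, mul_zero, ite_self, sub_zero]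
      have hmu2s : ∀ U,
          coneC a (fun T => if v ∈ T then (0 : K) else lam T + gam T) U ≠ 0 →
          U ⊆ W ∧ U.card = i + 1 ∧ OKf G W N U := by
        intro U hU
        have haU : a ∈ U := by
          by_contra hc
          rw [coneC, if_neg hc] at hU
          exact hU rfl
        have hU' : sgn K (U.erase a) a *
            (if v ∈ U.erase a then (0 : K)
              else lam (U.erase a) + gam (U.erase a)) ≠ 0 := by
          rw [coneC, if_pos haU] at hU
          exact hU
        have halne : (if v ∈ U.erase a then (0 : K)
            else lam (U.erase a) + gam (U.erase a)) ≠ 0 :=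
          fun hc => hU' (by rw [hc, mul_zero])
        obtain ⟨hSA, hSc⟩ := halphasupp _ halne
        have hUA : U ⊆ A := by
          intro x hx
          by_cases hxa : x = a
          · exact hxa ▸ haA
          · exact hSA (Finset.mem_erase.mpr ⟨hxa, hx⟩)
        refine ⟨hUA.trans hAW, ?_, ?_⟩
        · rw [← Finset.insert_erase haU,
            Finset.card_insert_of_notMem (Finset.notMem_erase a U), hSc]
        · right
          exact ⟨v, hvN, fun hc => hvA (hUA hc)⟩
      refine ⟨fun U => -coneC v gam U
        + coneC a (fun T => if v ∈ T then (0 : K) else lam T + gam T) U, ?_, ?_⟩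
      · intro U hU
        have hU' : -coneC v gam U
            + coneC a (fun T => if v ∈ T then (0 : K) else lam T + gam T) U ≠ 0 := hU
        have hcases : -coneC v gam U ≠ 0 ∨
            coneC a (fun T => if v ∈ T then (0 : K) else lam T + gam T) U ≠ 0 := by
          by_contra hc
          push_neg at hc
          rw [hc.1, hc.2, add_zero] at hU'
          exact hU' rfl
        rcases hcases with hdelne | hmu2ne
        · have hconene : coneC v gam U ≠ 0 :=
            fun hc => hdelne (by rw [hc, neg_zero])
          have hvU : v ∈ U := by
            by_contra hc
            rw [coneC, if_neg hc] at hconene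
            exact hconene rfl
          have hgamne : gam (U.erase v) ≠ 0 := by
            rw [coneC, if_pos hvU] at hconene
            exact fun hc => hconene (by rw [hc, mul_zero])
          obtain ⟨hSA, hSc, hSOK⟩ := hg1 _ hgamne
          have hUeq : insert v (U.erase v) = U := Finset.insert_erase hvU
          have heq : A \ U.erase v = W \ U := by
            conv_rhs => rw [← hUeq]
            rw [sdiff_insert', ← hA]
          refine ⟨?_, ?_, ?_⟩
          · intro x hx
            by_cases hxv : x = v
            · exact hxv ▸ hvW
            · exact hAW (hSA (Finset.mem_erase.mpr ⟨hxv, hx⟩))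
          · rw [← hUeq,
              Finset.card_insert_of_notMem (Finset.notMem_erase v U), hSc]
          · rcases hSOK with ⟨p, q, hpq, hp, hq⟩ | ⟨p, hpN, hpS⟩
            · exact Or.inl ⟨p, q, hpq, heq ▸ hp, heq ▸ hq⟩
            · right
              obtain ⟨hpv, hpN'⟩ := Finset.mem_erase.mp hpN
              refine ⟨p, hpN', fun hc => ?_⟩
              rw [← hUeq] at hc
              rcases Finset.mem_insert.mp hc with hc1 | hc2
              · exact hpv hc1
              · exact hpS hc2
        · exact hmu2s U hmu2ne
      · intro T
        calc bdry (fun U => -coneC v gam U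
              + coneC a (fun T => if v ∈ T then (0 : K) else lam T + gam T) U) T
            = bdry (fun U => -coneC v gam U) T
              + bdry (coneC a (fun T => if v ∈ T then (0 : K) else lam T + gam T)) T :=
              bdry_add _ _ T
          _ = (lam T - (if v ∈ T then (0 : K) else lam T + gam T))
              + (if v ∈ T then (0 : K) else lam T + gam T) := by
                rw [hdel T, hmu2b T]
          _ = lam T := by ring


-- ===================== algebra layer =====================

/-- Exponent vector of a squarefree monomial supported on `T`. -/
noncomputable def eT (T : Finset V) : V →₀ ℕ := ∑ t ∈ T, Finsupp.single t 1

lemma eT_apply (T : Finset V) (v : V) : eT T v = if v ∈ T then 1 else 0 := by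
  classical
  simp [eT, Finsupp.finset_sum_apply, Finsupp.single_apply]

lemma eT_mono {T U : Finset V} (h : T ⊆ U) : eT T ≤ eT U := by
  intro v
  rw [eT_apply, eT_apply]
  split_ifs with h1 h2
  · exact le_refl _
  · exact absurd (h h1) h2
  · exact Nat.zero_le _
  · exact le_refl _

lemma subset_of_eT_le {T W : Finset V} (h : eT T ≤ eT W) : T ⊆ W := by
  intro t ht
  have h2 := h t
  rw [eT_apply, eT_apply, if_pos ht] at h2
  by_contra hc
  rw [if_neg hc] at h2
  omega

lemma eT_insert {t : V} {T : Finset V} (h : t ∉ T) :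
    eT (insert t T) = Finsupp.single t 1 + eT T := by
  rw [eT, Finset.sum_insert h, eT]

lemma eT_insert_le_iff {t : V} {T : Finset V} (h : t ∉ T) (β : V →₀ ℕ) :
    eT (insert t T) ≤ β ↔ eT T ≤ β ∧ 1 ≤ β t := by
  constructor
  · intro h'
    refine ⟨le_trans (eT_mono (Finset.subset_insert t T)) h', ?_⟩
    have h2 := h' t
    rw [eT_apply, if_pos (Finset.mem_insert_self t T)] at h2
    exact h2
  · rintro ⟨h1, h2⟩ v
    rw [eT_apply]
    by_cases hv : v ∈ insert t T
    · rw [if_pos hv]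
      rcases Finset.mem_insert.mp hv with rfl | hvT
      · exact h2
      · have h3 := h1 v
        rw [eT_apply, if_pos hvT] at h3
        exact h3
    · rw [if_neg hv]
      exact Nat.zero_le _

lemma eT_sub_insert {t : V} {T : Finset V} (h : t ∉ T) (β : V →₀ ℕ) :
    β - eT (insert t T) = (β - eT T) - Finsupp.single t 1 := by
  rw [eT_insert h, tsub_add_eq_tsub_tsub_swap]

lemma sub_eT_apply_not_mem {t : V} {T : Finset V} (h : t ∉ T) (β : V →₀ ℕ) :
    (β - eT T) t = β t := by
  rw [Finsupp.tsub_apply, eT_apply, if_neg h, Nat.sub_zero]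

lemma weight_eT (T : Finset V) :
    Finsupp.weight (1 : V → ℕ) (eT T) = T.card := by
  rw [eT, map_sum]
  have h1 : ∀ t ∈ T, Finsupp.weight (1 : V → ℕ) (Finsupp.single t 1) = 1 := by
    intro t _
    rw [Finsupp.weight_apply, Finsupp.sum_single_index] <;> simp
  rw [Finset.sum_congr rfl h1, Finset.sum_const, smul_eq_mul, mul_one]

lemma weight_split {T : Finset V} {β : V →₀ ℕ} (h : eT T ≤ β) :
    Finsupp.weight (1 : V → ℕ) β
      = Finsupp.weight (1 : V → ℕ) (β - eT T) + T.card := by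
  conv_lhs => rw [← tsub_add_cancel_of_le h]
  rw [map_add, weight_eT]

lemma X_as_monomial (K : Type*) [Field K] (z : V) :
    (X z : MvPolynomial V K) = monomial (Finsupp.single z 1) 1 := by
  rw [← pow_one (X z : MvPolynomial V K), X_pow_eq_monomial]

lemma X_mul_X_eq (K : Type*) [Field K] (u w : V) :
    (X u * X w : MvPolynomial V K)
      = monomial (Finsupp.single u 1 + Finsupp.single w 1) 1 := by
  rw [X_as_monomial, X_as_monomial, monomial_mul, one_mul]

variable {K : Type*} [Field K]

lemma edgeIdeal_eq_span_monomials (G : SimpleGraph V) :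
    edgeIdeal K G = Ideal.span ((fun s => monomial s (1 : K)) ''
      {γ | ∃ p q, G.Adj p q ∧ γ = Finsupp.single p 1 + Finsupp.single q 1}) := by
  unfold edgeIdeal
  congr 1
  ext f
  simp only [Set.mem_setOf_eq, Set.mem_image]
  constructor
  · rintro ⟨u, w, hadj, rfl⟩
    exact ⟨Finsupp.single u 1 + Finsupp.single w 1, ⟨u, w, hadj, rfl⟩,
      (X_mul_X_eq K u w).symm⟩
  · rintro ⟨γ, ⟨p, q, hadj, rfl⟩, rfl⟩
    exact ⟨p, q, hadj, (X_mul_X_eq K p q).symm⟩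

lemma mem_edgeIdeal_support (G : SimpleGraph V) {f : MvPolynomial V K}
    (hf : f ∈ edgeIdeal K G) {γ : V →₀ ℕ} (hγ : γ ∈ f.support) :
    ∃ p q, G.Adj p q ∧ 1 ≤ γ p ∧ 1 ≤ γ q := by
  rw [edgeIdeal_eq_span_monomials, mem_ideal_span_monomial_image] at hf
  obtain ⟨si, ⟨p, q, hadj, rfl⟩, hle⟩ := hf γ hγ
  have hne : p ≠ q := hadj.ne
  refine ⟨p, q, hadj, ?_, ?_⟩
  · have h1 := hle p
    rw [Finsupp.add_apply, Finsupp.single_eq_same,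
      Finsupp.single_eq_of_ne' (Ne.symm hne)] at h1
    omega
  · have h1 := hle q
    rw [Finsupp.add_apply, Finsupp.single_eq_same,
      Finsupp.single_eq_of_ne' hne] at h1
    omega

lemma monomial_mem_edgeIdeal (G : SimpleGraph V) {γ : V →₀ ℕ} (k : K) {p q : V}
    (hpq : G.Adj p q) (hp : 1 ≤ γ p) (hq : 1 ≤ γ q) :
    monomial γ k ∈ edgeIdeal K G := by
  have hne : p ≠ q := hpq.ne
  have hle : Finsupp.single p 1 + Finsupp.single q 1 ≤ γ := by
    intro v
    rw [Finsupp.add_apply]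
    by_cases hvp : v = p
    · subst hvp
      rw [Finsupp.single_eq_same, Finsupp.single_eq_of_ne' (Ne.symm hne)]
      omega
    · rw [Finsupp.single_eq_of_ne' (fun h => hvp h.symm)]
      by_cases hvq : v = q
      · subst hvq
        rw [Finsupp.single_eq_same]
        omega
      · rw [Finsupp.single_eq_of_ne' (fun h => hvq h.symm)]
        omega
  have hXmem : (X p * X q : MvPolynomial V K) ∈ edgeIdeal K G := by
    unfold edgeIdeal
    exact Ideal.subset_span ⟨p, q, hpq, rfl⟩
  have heq : monomial γ k
      = monomial (γ - (Finsupp.single p 1 + Finsupp.single q 1)) k * (X p * X q) := by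
    rw [X_mul_X_eq, monomial_mul, mul_one, tsub_add_cancel_of_le hle]
  rw [heq]
  exact Ideal.mul_mem_left _ _ hXmem

lemma coeff_koszulDiff (f : Finset V → MvPolynomial V K) (T : Finset V) (γ : V →₀ ℕ) :
    coeff γ (koszulDiff K f T)
      = ∑ t ∈ Tᶜ, sgn K T t *
          (if 1 ≤ γ t then coeff (γ - Finsupp.single t 1) (f (insert t T)) else 0) := by
  classical
  unfold koszulDiff
  rw [coeff_sum]
  apply Finset.sum_congr rfl
  intro t ht
  have hC : ((-1 : MvPolynomial V K) ^ ((T.filter (fun s => s < t)).card))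
      = C ((-1 : K) ^ ((T.filter (fun s => s < t)).card)) := by
    rw [map_pow, map_neg, map_one]
  rw [hC, coeff_C_mul, coeff_X_mul']
  rw [sgn]
  congr 1
  simp only [Finsupp.mem_support_iff, ← Nat.one_le_iff_ne_zero]

/-- The coefficient chain of `c` in multidegree `β`. -/
noncomputable def lamB (c : Finset V → MvPolynomial V K) (β : V →₀ ℕ) :
    Finset V → K :=
  fun T => if eT T ≤ β then coeff (β - eT T) (c T) else 0

lemma lamB_cycle (c : Finset V → MvPolynomial V K) (hc4 : koszulDiff K c = 0)
    (β : V →₀ ℕ) (T' : Finset V) : bdry (lamB c β) T' = 0 := by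
  classical
  by_cases hle : eT T' ≤ β
  · have h0 : coeff (β - eT T') (koszulDiff K c T') = 0 := by
      rw [hc4]
      simp
    rw [coeff_koszulDiff] at h0
    rw [bdry, ← h0]
    apply Finset.sum_congr rfl
    intro t ht
    have htT : t ∉ T' := Finset.mem_compl.mp ht
    congr 1
    show (if eT (insert t T') ≤ β then coeff (β - eT (insert t T')) (c (insert t T'))
        else 0) = _
    have hsubapp : (β - eT T') t = β t := sub_eT_apply_not_mem htT β
    by_cases h1 : 1 ≤ β t
    · rw [if_pos ((eT_insert_le_iff htT β).mpr ⟨hle, h1⟩),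
        if_pos (by rw [hsubapp]; exact h1), eT_sub_insert htT]
    · rw [if_neg (fun hc => h1 ((eT_insert_le_iff htT β).mp hc).2),
        if_neg (by rw [hsubapp]; exact h1)]
  · rw [bdry]
    apply Finset.sum_eq_zero
    intro t ht
    have h0 : lamB c β (insert t T') = 0 := by
      show (if eT (insert t T') ≤ β then _ else (0 : K)) = 0
      rw [if_neg (fun hc => hle (le_trans (eT_mono (Finset.subset_insert t T')) hc))]
    rw [h0, mul_zero]

lemma lamB_supp (G : SimpleGraph V) {c : Finset V → MvPolynomial V K} {i d : ℕ}
    (hc1 : ∀ T, c T ∈ edgeIdeal K G) (hc2 : ∀ T, T.card ≠ i → c T = 0)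
    (hc3 : ∀ T, (c T).IsHomogeneous d) {β : V →₀ ℕ} {T : Finset V}
    (h : lamB c β T ≠ 0) :
    eT T ≤ β ∧ T.card = i ∧
      (∃ p q, G.Adj p q ∧ 1 ≤ (β - eT T) p ∧ 1 ≤ (β - eT T) q) ∧
      Finsupp.weight (1 : V → ℕ) (β - eT T) = d := by
  have h' : (if eT T ≤ β then coeff (β - eT T) (c T) else 0) ≠ 0 := h
  by_cases hle : eT T ≤ β
  · rw [if_pos hle] at h'
    have hsupp : (β - eT T) ∈ (c T).support := MvPolynomial.mem_support_iff.mpr h'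
    refine ⟨hle, ?_, mem_edgeIdeal_support G (hc1 T) hsupp, hc3 T h'⟩
    by_contra hc
    rw [hc2 T hc] at h'
    simp at h'
  · rw [if_neg hle] at h'
    exact absurd rfl h'

lemma erase_eT_apply {x v : V} {U : Finset V} (hxv : x ≠ v) :
    eT (U.erase v) x = eT U x := by
  simp [eT_apply, Finset.mem_erase, hxv]

/-- Boundary construction for a single multidegree. -/
lemma perBeta (G : SimpleGraph V) {c : Finset V → MvPolynomial V K} {i d : ℕ}
    (hc1 : ∀ T, c T ∈ edgeIdeal K G) (hc2 : ∀ T, T.card ≠ i → c T = 0)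
    (hc3 : ∀ T, (c T).IsHomogeneous d) (hc4 : koszulDiff K c = 0)
    (hno : ¬ OM G Finset.univ (d - 1)) (hd2 : 2 ≤ d) (β : V →₀ ℕ) :
    ∃ mu : Finset V → K,
      (∀ U, mu U ≠ 0 → U.card = i + 1 ∧ eT U ≤ β ∧
        ∃ p q, G.Adj p q ∧ 1 ≤ (β - eT U) p ∧ 1 ≤ (β - eT U) q) ∧
      (∀ T, bdry mu T = lamB c β T) := by
  classical
  by_cases hz : ∀ T, lamB c β T = 0
  · exact ⟨fun _ => 0, fun U h => absurd rfl h,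
      fun T => by rw [bdry_zero, hz]⟩
  push_neg at hz
  obtain ⟨T₀, hT₀⟩ := hz
  obtain ⟨hle₀, hcard₀, _, hdeg₀⟩ := lamB_supp G hc1 hc2 hc3 hT₀
  have hsplit : Finsupp.weight (1 : V → ℕ) β = d + i := by
    rw [weight_split hle₀, hdeg₀, hcard₀]
  by_cases hsq : ∃ v, 2 ≤ β v
  · -- non-squarefree multidegree: cone it off
    obtain ⟨v, hv⟩ := hsq
    refine ⟨coneC v (lamB c β), ?_, fun T => by
      rw [bdry_coneC, lamB_cycle c hc4 β, mul_zero, ite_self, sub_zero]⟩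
    intro U hU
    have hvU : v ∈ U := by
      by_contra hc
      rw [coneC, if_neg hc] at hU
      exact hU rfl
    have hlamne : lamB c β (U.erase v) ≠ 0 := by
      rw [coneC, if_pos hvU] at hU
      exact fun hc => hU (by rw [hc, mul_zero])
    obtain ⟨hleS, hcardS, ⟨p, q, hpq, hp, hq⟩, _⟩ := lamB_supp G hc1 hc2 hc3 hlamne
    have hUeq : insert v (U.erase v) = U := Finset.insert_erase hvU
    refine ⟨?_, ?_, ?_⟩
    · rw [← hUeq, Finset.card_insert_of_notMem (Finset.notMem_erase v U), hcardS]
    · intro w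
      rw [eT_apply]
      by_cases hw : w ∈ U
      · rw [if_pos hw]
        by_cases hwv : w = v
        · subst hwv
          omega
        · have h2 := hleS w
          rw [eT_apply, if_pos (Finset.mem_erase.mpr ⟨hwv, hw⟩)] at h2
          exact h2
      · rw [if_neg hw]
        exact Nat.zero_le _
    · have hgen : ∀ x : V, 1 ≤ (β - eT (U.erase v)) x → 1 ≤ (β - eT U) x := by
        intro x hx
        rw [Finsupp.tsub_apply] at hx ⊢
        by_cases hxv : x = v
        · rw [hxv]
          have h1 : eT U v ≤ 1 := by
            rw [eT_apply]
            split_ifs <;> omega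
          omega
        · rw [← erase_eT_apply hxv (U := U)]
          exact hx
      exact ⟨p, q, hpq, hgen p hp, hgen q hq⟩
  · -- squarefree multidegree: the combinatorial core
    have hsq' : ∀ v, β v ≤ 1 := by
      push_neg at hsq
      intro v
      have := hsq v
      omega
    set W := β.support with hW
    have hβeq : β = eT W := by
      ext v
      rw [eT_apply]
      by_cases hv : v ∈ W
      · rw [if_pos hv]
        have h1 := Finsupp.mem_support_iff.mp hv
        have := hsq' v
        omega
      · rw [if_neg hv]
        exact Finsupp.notMem_support_iff.mp hv
    have hwt : Finsupp.weight (1 : V → ℕ) β = W.card := by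
      have h1 : ∀ v ∈ W, β v = 1 := by
        intro v hv
        have h2 := Finsupp.mem_support_iff.mp hv
        have := hsq' v
        omega
      rw [Finsupp.weight_apply, Finsupp.sum]
      simp only [Pi.one_apply, smul_eq_mul, mul_one]
      rw [Finset.sum_congr rfl h1, Finset.sum_const, smul_eq_mul, mul_one]
    have hWcard : W.card = i + d := by omega
    have hcore := core G K W.card W ∅ i d (lamB c β) le_rfl
      (Finset.empty_subset W) hd2 hWcard
      (by rw [Finset.sdiff_empty]
          exact fun hom => hno (OM_mono (Finset.subset_univ W) hom))
      ?_ (lamB_cycle c hc4 β)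
    · obtain ⟨mu, hmus, hmub⟩ := hcore
      refine ⟨mu, ?_, hmub⟩
      intro U hU
      obtain ⟨hUW, hUc, hUOK⟩ := hmus U hU
      refine ⟨hUc, hβeq ▸ eT_mono hUW, ?_⟩
      rcases hUOK with ⟨p, q, hpq, hp, hq⟩ | ⟨p, hpN, _⟩
      · have hgen : ∀ x : V, x ∈ W \ U → 1 ≤ (β - eT U) x := by
          intro x hx
          obtain ⟨hxW, hxU⟩ := Finset.mem_sdiff.mp hx
          have h1 := Finsupp.mem_support_iff.mp hxW
          rw [Finsupp.tsub_apply, eT_apply, if_neg hxU]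
          omega
        exact ⟨p, q, hpq, hgen p hp, hgen q hq⟩
      · exact absurd hpN (Finset.notMem_empty p)
    · intro T hT
      obtain ⟨hle, hcard, ⟨p, q, hpq, hp, hq⟩, _⟩ := lamB_supp G hc1 hc2 hc3 hT
      have hTW : T ⊆ W := subset_of_eT_le (hβeq ▸ hle)
      refine ⟨hTW, hcard, Or.inl ⟨p, q, hpq, ?_, ?_⟩⟩
      · have hp' := hp
        rw [Finsupp.tsub_apply, eT_apply] at hp'
        have hpsup : β p ≠ 0 := by
          split_ifs at hp' <;> omega
        have hpT : p ∉ T := by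
          intro hc
          rw [if_pos hc] at hp'
          have := hsq' p
          omega
        exact Finset.mem_sdiff.mpr ⟨Finsupp.mem_support_iff.mpr hpsup, hpT⟩
      · have hq' := hq
        rw [Finsupp.tsub_apply, eT_apply] at hq'
        have hqsup : β q ≠ 0 := by
          split_ifs at hq' <;> omega
        have hqT : q ∉ T := by
          intro hc
          rw [if_pos hc] at hq'
          have := hsq' q
          omega
        exact Finset.mem_sdiff.mpr ⟨Finsupp.mem_support_iff.mpr hqsup, hqT⟩

/-- Main bound: a nonvanishing Tor forces a large ordered matching. -/
theorem key (G : SimpleGraph V) (i d : ℕ)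
    (h : torNonzero (edgeIdeal K G) i d) : d ≤ ordMatchNum G + 1 := by
  classical
  by_contra hcon
  push_neg at hcon
  have hd2 : 2 ≤ d := by omega
  have hbdd : BddAbove {r | ∃ a b : Fin r → V, IsOrderedMatching G r a b} := by
    refine ⟨Fintype.card V, fun r hr => ?_⟩
    obtain ⟨a, b, _, _, hinj, _⟩ := hr
    have hcle := Fintype.card_le_of_injective _ hinj
    simp only [Fintype.card_sum, Fintype.card_fin] at hcle
    omega
  have hno : ¬ OM G Finset.univ (d - 1) := by
    rintro ⟨a, b, _, _, h3, h4, h5, h6⟩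
    have hmem : (d - 1) ∈ {r | ∃ a b : Fin r → V, IsOrderedMatching G r a b} :=
      ⟨a, b, by omega, h3, h4, h5, h6⟩
    have hle : d - 1 ≤ ordMatchNum G := by
      unfold ordMatchNum
      exact le_csSup hbdd hmem
    omega
  obtain ⟨c, hc1, hc2, hc3, hc4, hnb⟩ := h
  apply hnb
  set B : Finset (V →₀ ℕ) :=
    Finset.univ.biUnion
      (fun T : Finset V => (c T).support.image (fun γ => γ + eT T)) with hB
  choose mu hmus hmub using fun β => perBeta G hc1 hc2 hc3 hc4 hno hd2 β
  set g : Finset V → MvPolynomial V K :=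
    fun T => ∑ β ∈ B, if eT T ≤ β then monomial (β - eT T) (mu β T) else 0 with hg
  have hgU : ∀ U, g U
      = ∑ β ∈ B, if eT U ≤ β then monomial (β - eT U) (mu β U) else 0 :=
    fun U => by rw [hg]
  refine ⟨g, ?_, ?_, ?_⟩
  · intro T
    rw [hgU]
    apply Ideal.sum_mem
    intro β _
    split_ifs with hle
    · by_cases hmu : mu β T = 0
      · rw [hmu, map_zero]
        exact Ideal.zero_mem _
      · obtain ⟨_, _, p, q, hpq, hp, hq⟩ := hmus β T hmu
        exact monomial_mem_edgeIdeal G _ hpq hp hq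
    · exact Ideal.zero_mem _
  · intro T hT
    rw [hgU]
    apply Finset.sum_eq_zero
    intro β _
    have hmu : mu β T = 0 := by
      by_contra hc
      exact hT (hmus β T hc).1
    split_ifs
    · rw [hmu, map_zero]
    · rfl
  · funext T
    apply MvPolynomial.ext
    intro γ
    rw [coeff_koszulDiff]
    set β₀ := γ + eT T with hβ₀
    have hβ₀le : eT T ≤ β₀ := le_add_self
    have hβ₀sub : β₀ - eT T = γ := add_tsub_cancel_right γ (eT T)
    have hβ₀t : ∀ t, t ∉ T → β₀ t = γ t := by
      intro t htT
      rw [hβ₀, Finsupp.add_apply, eT_apply, if_neg htT, add_zero]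
    have hkey : ∀ t, t ∉ T → 1 ≤ γ t → ∀ β, eT (insert t T) ≤ β →
        β - eT (insert t T) = γ - Finsupp.single t 1 → β = β₀ := by
      intro t htT h1t β hleβ hceq
      have hβeq : β = (γ - Finsupp.single t 1) + eT (insert t T) := by
        rw [← hceq, tsub_add_cancel_of_le hleβ]
      rw [hβeq, eT_insert htT, hβ₀, ← add_assoc,
        tsub_add_cancel_of_le (Finsupp.single_le_iff.mpr h1t)]
    by_cases hmem : β₀ ∈ B
    · have hinner : ∀ t, t ∉ T → 1 ≤ γ t →
          coeff (γ - Finsupp.single t 1) (g (insert t T)) = mu β₀ (insert t T) := by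
        intro t htT h1t
        rw [hgU, coeff_sum]
        rw [Finset.sum_eq_single_of_mem β₀ hmem]
        · have hle' : eT (insert t T) ≤ β₀ := by
            rw [eT_insert_le_iff htT β₀]
            refine ⟨hβ₀le, ?_⟩
            rw [hβ₀t t htT]
            exact h1t
          rw [if_pos hle', coeff_monomial,
            if_pos (by rw [eT_sub_insert htT, hβ₀sub])]
        · intro β hβB hβne
          split_ifs with hleβ
          · rw [coeff_monomial, if_neg (fun hceq => hβne (hkey t htT h1t β hleβ hceq))]
          · exact MvPolynomial.coeff_zero _
      have hstep : ∀ t ∈ Tᶜ, sgn K T t *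
          (if 1 ≤ γ t then coeff (γ - Finsupp.single t 1) (g (insert t T)) else 0)
          = sgn K T t * mu β₀ (insert t T) := by
        intro t ht
        have htT : t ∉ T := Finset.mem_compl.mp ht
        by_cases h1t : 1 ≤ γ t
        · rw [if_pos h1t, hinner t htT h1t]
        · rw [if_neg h1t]
          have hmu0 : mu β₀ (insert t T) = 0 := by
            by_contra hc
            have hle2 := (hmus β₀ _ hc).2.1
            have h2 := ((eT_insert_le_iff htT β₀).mp hle2).2
            rw [hβ₀t t htT] at h2
            exact h1t h2
          rw [hmu0]
      rw [Finset.sum_congr rfl hstep]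
      have hb := hmub β₀ T
      rw [bdry] at hb
      rw [hb]
      show (if eT T ≤ β₀ then coeff (β₀ - eT T) (c T) else 0) = coeff γ (c T)
      rw [if_pos hβ₀le, hβ₀sub]
    · have hcT : coeff γ (c T) = 0 := by
        by_contra hc
        exact hmem (Finset.mem_biUnion.mpr ⟨T, Finset.mem_univ T,
          Finset.mem_image.mpr ⟨γ, MvPolynomial.mem_support_iff.mpr hc, hβ₀.symm⟩⟩)
      rw [hcT]
      apply Finset.sum_eq_zero
      intro t ht
      have htT : t ∉ T := Finset.mem_compl.mp ht
      by_cases h1t : 1 ≤ γ t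
      · rw [if_pos h1t, hgU, coeff_sum]
        have hzero : ∀ β ∈ B, coeff (γ - Finsupp.single t 1)
            (if eT (insert t T) ≤ β then monomial (β - eT (insert t T))
              (mu β (insert t T)) else 0) = 0 := by
          intro β hβ
          split_ifs with hleβ
          · rw [coeff_monomial]
            rw [if_neg (fun hceq => hmem ((hkey t htT h1t β hleβ hceq) ▸ hβ))]
          · exact MvPolynomial.coeff_zero _
        rw [Finset.sum_eq_zero hzero, mul_zero]
      · rw [if_neg h1t, mul_zero]

end RegAux

/-- for any graph `G`, `reg(I(G)) ≤ ord-match(G) + 1`. -/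
theorem reg_edgeIdeal_le_ordMatch {n : ℕ} (K : Type*) [Field K]
    (G : SimpleGraph (Fin n)) :
    regIdeal (edgeIdeal K G) ≤ ordMatchNum G + 1 := by
  unfold regIdeal
  apply csSup_le'
  rintro d ⟨i, hd⟩
  exact RegAux.key G i d hd
end
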